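/- For all i ∈ ℕ, the product of slopes satisfies ∏_{j=1}^i δ⁽ʲ⁾ · (1/2 - 2δ⁽ⁱ⁺¹⁾) ≥ (arctan(8) - arctan(1))ⁱ / 2^{2i²+4}, where δ⁽ʲ⁾ = (1/2)(tan(θⱼ₊₁) - tan(θⱼ))/(2tan(θⱼ₊₁) + tan(θⱼ)) and θ₁ = arctan(1), θⱼ₊₁ = θⱼ + (arctan(8)-arctan(1))/2ʲ. -/

import Mathlib

open Real in
lemma tan_sub_formula_aux {a b : ℝ} (ha : a ∈ Set.Ioo (-(π/2)) (π/2))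
    (hb : b ∈ Set.Ioo (-(π/2)) (π/2)) (hab : b - a ∈ Set.Ioo (-(π/2)) (π/2)) :
    Real.tan b - Real.tan a = Real.tan (b - a) * (1 + Real.tan a * Real.tan b) := by
  have hca : 0 < Real.cos a := Real.cos_pos_of_mem_Ioo ha
  have hcb : 0 < Real.cos b := Real.cos_pos_of_mem_Ioo hb
  have hcab : 0 < Real.cos b * Real.cos a + Real.sin b * Real.sin a := by
    rw [← Real.cos_sub]; exact Real.cos_pos_of_mem_Ioo hab
  rw [Real.tan_eq_sin_div_cos a, Real.tan_eq_sin_div_cos b, Real.tan_eq_sin_div_cos (b - a),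
    Real.sin_sub, Real.cos_sub]
  field_simp

set_option maxHeartbeats 1000000

theorem stmt_18 (θ : ℕ → ℝ)
    (hθ1 : θ 1 = Real.arctan 1)
    (hrec : ∀ j : ℕ, 1 ≤ j →
      θ (j + 1) = θ j + (Real.arctan 8 - Real.arctan 1) / 2 ^ j)
    (δ : ℕ → ℝ)
    (hδ : ∀ j, δ j = (1 / 2) * (Real.tan (θ (j + 1)) - Real.tan (θ j)) /
      (2 * Real.tan (θ (j + 1)) + Real.tan (θ j))) :
    ∀ i : ℕ, 1 ≤ i →
      (Real.arctan 8 - Real.arctan 1) ^ i / 2 ^ (2 * i ^ 2 + 4) ≤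
        (∏ j ∈ Finset.Icc 1 i, δ j) * (1 / 2 - 2 * δ (i + 1)) := by
  set D : ℝ := Real.arctan 8 - Real.arctan 1 with hDdef
  have hpi_lt : Real.pi < 3.15 := Real.pi_lt_d2
  have hpi_gt : 3.1415 < Real.pi := Real.pi_gt_d4
  have hA1 : Real.arctan 1 = Real.pi / 4 := Real.arctan_one
  -- arctan (1/8) < 1/8
  have h18pos : 0 < Real.arctan ((8:ℝ)⁻¹) := by
    rw [show (0:ℝ) = Real.arctan 0 by simp]
    exact Real.arctan_strictMono (by norm_num)
  have h18 : Real.arctan ((8:ℝ)⁻¹) < (8:ℝ)⁻¹ := by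
    have := Real.lt_tan h18pos (Real.arctan_lt_pi_div_two _)
    rwa [Real.tan_arctan] at this
  have hA8 : Real.arctan 8 = Real.pi / 2 - Real.arctan ((8:ℝ)⁻¹) := by
    have := Real.arctan_inv_of_pos (show (0:ℝ) < 8 by norm_num)
    linarith
  have hDub : D ≤ 63/80 := by
    have := Real.arctan_lt_pi_div_two (8:ℝ)
    rw [hDdef, hA1]; linarith
  have hDlb : 33/50 ≤ D := by
    rw [hDdef, hA8, hA1]
    have : (8:ℝ)⁻¹ = 1/8 := by norm_num
    rw [this] at h18
    linarith
  have hD0 : 0 < D := lt_of_lt_of_le (by norm_num) hDlb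
  -- explicit formula for θ
  have hθform : ∀ j : ℕ, 1 ≤ j → θ j = Real.arctan 1 + D * (1 - 2 / 2 ^ j) := by
    intro j hj
    induction j, hj using Nat.le_induction with
    | base => rw [hθ1]; norm_num
    | succ n hn ih =>
      have h2n : (2:ℝ) ^ n ≠ 0 := by positivity
      rw [hrec n hn, ih, pow_succ]
      field_simp
      ring
  have h2pow : ∀ j : ℕ, 1 ≤ j → (2:ℝ) ≤ 2 ^ j := by
    intro j hj
    calc (2:ℝ) = 2 ^ 1 := by norm_num
    _ ≤ 2 ^ j := pow_le_pow_right₀ (by norm_num) hj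
  -- θ j between arctan 1 and arctan 8
  have hθmem : ∀ j : ℕ, 1 ≤ j → Real.arctan 1 ≤ θ j ∧ θ j ≤ Real.arctan 8 := by
    intro j hj
    rw [hθform j hj]
    have h2j : (0:ℝ) < 2 ^ j := by positivity
    have h1 : (0:ℝ) ≤ 1 - 2 / 2 ^ j := by
      have : (2:ℝ) / 2 ^ j ≤ 1 := by rw [div_le_one h2j]; exact h2pow j hj
      linarith
    have h2 : (1:ℝ) - 2 / 2 ^ j ≤ 1 := by
      have : 0 < 2 / (2:ℝ) ^ j := by positivity
      linarith
    have hm1 : 0 ≤ D * (1 - 2 / 2 ^ j) := mul_nonneg hD0.le h1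
    have hm2 : D * (1 - 2 / 2 ^ j) ≤ D * 1 := mul_le_mul_of_nonneg_left h2 hD0.le
    rw [mul_one, hDdef] at hm2
    constructor
    · linarith
    · linarith
  have hθIoo : ∀ j : ℕ, 1 ≤ j → θ j ∈ Set.Ioo (-(Real.pi/2)) (Real.pi/2) := by
    intro j hj
    obtain ⟨h1, h2⟩ := hθmem j hj
    exact ⟨lt_of_lt_of_le (Real.arctan_mem_Ioo 1).1 h1,
      lt_of_le_of_lt h2 (Real.arctan_mem_Ioo 8).2⟩
  -- 1 ≤ tan (θ j) ≤ 8
  have htan : ∀ j : ℕ, 1 ≤ j → 1 ≤ Real.tan (θ j) ∧ Real.tan (θ j) ≤ 8 := by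
    intro j hj
    obtain ⟨h1, h2⟩ := hθmem j hj
    constructor
    · rw [show (1:ℝ) = Real.tan (Real.arctan 1) by rw [Real.tan_arctan]]
      exact Real.strictMonoOn_tan.monotoneOn (Real.arctan_mem_Ioo 1) (hθIoo j hj) h1
    · rw [show (8:ℝ) = Real.tan (Real.arctan 8) by rw [Real.tan_arctan]]
      exact Real.strictMonoOn_tan.monotoneOn (hθIoo j hj) (Real.arctan_mem_Ioo 8) h2
  -- the step identity
  have hDj_mem : ∀ j : ℕ, 1 ≤ j → D / 2 ^ j ∈ Set.Ioo (-(Real.pi/2)) (Real.pi/2) := by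
    intro j hj
    have h2j : (0:ℝ) < 2 ^ j := by positivity
    have hlow : 0 < D / 2 ^ j := by positivity
    have hle : D / 2 ^ j ≤ D / 2 := by
      apply div_le_div_of_nonneg_left hD0.le (by norm_num) (h2pow j hj)
    constructor
    · linarith [Real.pi_pos]
    · have : D / 2 ≤ 63/160 := by linarith
      linarith
  have hstep : ∀ j : ℕ, 1 ≤ j → Real.tan (θ (j+1)) - Real.tan (θ j) =
      Real.tan (D / 2 ^ j) * (1 + Real.tan (θ j) * Real.tan (θ (j+1))) := by
    intro j hj
    have hsub : θ (j+1) - θ j = D / 2 ^ j := by rw [hrec j hj]; ring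
    calc Real.tan (θ (j+1)) - Real.tan (θ j)
        = Real.tan (θ (j+1) - θ j) * (1 + Real.tan (θ j) * Real.tan (θ (j+1))) :=
          tan_sub_formula_aux (hθIoo j hj) (hθIoo (j+1) (by omega))
            (by rw [hsub]; exact hDj_mem j hj)
      _ = Real.tan (D / 2 ^ j) * (1 + Real.tan (θ j) * Real.tan (θ (j+1))) := by rw [hsub]
  have htanDj : ∀ j : ℕ, 1 ≤ j → D / 2 ^ j ≤ Real.tan (D / 2 ^ j) := by
    intro j hj
    have hm := hDj_mem j hj
    have hp : 0 < D / 2 ^ j := by positivity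
    exact (Real.lt_tan hp hm.2).le
  -- lower bound for δ
  have hδlb : ∀ j : ℕ, 1 ≤ j → 9/34 * (D / 2 ^ j) ≤ δ j := by
    intro j hj
    obtain ⟨ht1, ht8⟩ := htan j hj
    obtain ⟨ht1', ht8'⟩ := htan (j+1) (by omega)
    set t := Real.tan (θ j)
    set t' := Real.tan (θ (j+1))
    have hden : (0:ℝ) < 2 * t' + t := by linarith
    rw [hδ j, le_div_iff₀ hden]
    have hkey : 9/17 * (2 * t' + t) ≤ 1 + t * t' := by nlinarith [(t - 1) * (17 * t' - 9)]
    have hΔ : 0 < D / 2 ^ j := by positivity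
    have htΔ := htanDj j hj
    have hpos1 : (0:ℝ) ≤ 1 + t * t' := by nlinarith
    have h1 : D / 2 ^ j * (9/17 * (2 * t' + t)) ≤ D / 2 ^ j * (1 + t * t') :=
      mul_le_mul_of_nonneg_left hkey hΔ.le
    have h2 : D / 2 ^ j * (1 + t * t') ≤ Real.tan (D / 2 ^ j) * (1 + t * t') :=
      mul_le_mul_of_nonneg_right htΔ hpos1
    rw [hstep j hj]
    linarith
  have hδ0 : ∀ j : ℕ, 1 ≤ j → 0 ≤ δ j := by
    intro j hj
    have := hδlb j hj
    have : (0:ℝ) < 9/34 * (D / 2 ^ j) := by positivity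
    linarith [hδlb j hj]
  -- upper bound for δ
  have hδub : ∀ j : ℕ, 1 ≤ j → δ j ≤ 7/34 := by
    intro j hj
    obtain ⟨ht1, ht8⟩ := htan j hj
    obtain ⟨ht1', ht8'⟩ := htan (j+1) (by omega)
    set t := Real.tan (θ j)
    set t' := Real.tan (θ (j+1))
    have hden : (0:ℝ) < 2 * t' + t := by linarith
    rw [hδ j, div_le_iff₀ hden]
    nlinarith
  have hfac : ∀ j : ℕ, 1 ≤ j → (1:ℝ)/16 ≤ 1/2 - 2 * δ j := by
    intro j hj
    have := hδub j hj
    linarith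
  -- product lower bound for i ≥ 2
  have hprod : ∀ i : ℕ, 2 ≤ i → D ^ i / 2 ^ (2 * i ^ 2) ≤ ∏ j ∈ Finset.Icc 1 i, δ j := by
    intro i hi
    induction i, hi using Nat.le_induction with
    | base =>
      have hIcc : Finset.Icc 1 2 = {1, 2} := by decide
      rw [hIcc, Finset.prod_insert (by decide), Finset.prod_singleton]
      have h1 := hδlb 1 (by norm_num)
      have h2 := hδlb 2 (by norm_num)
      have hp1 : (0:ℝ) ≤ 9/34 * (D / 2 ^ 1) := by positivity
      have := mul_le_mul h1 h2 (by positivity) (le_trans hp1 h1)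
      have hD2 : D ^ 2 / 2 ^ (2 * 2 ^ 2) ≤ 9/34 * (D / 2 ^ 1) * (9/34 * (D / 2 ^ 2)) := by
        have : (0:ℝ) ≤ D ^ 2 := sq_nonneg D
        norm_num
        nlinarith
      linarith
    | succ n hn ih =>
      rw [Finset.prod_Icc_succ_top (by omega : 1 ≤ n + 1)]
      have hlb := hδlb (n+1) (by omega)
      have hprev : (0:ℝ) ≤ D ^ n / 2 ^ (2 * n ^ 2) := by positivity
      have hmul : D ^ n / 2 ^ (2 * n ^ 2) * (9/34 * (D / 2 ^ (n+1))) ≤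
          (∏ j ∈ Finset.Icc 1 n, δ j) * δ (n+1) :=
        mul_le_mul ih hlb (by positivity) (le_trans hprev ih)
      have hkey : D ^ (n+1) / 2 ^ (2 * (n+1) ^ 2) ≤
          D ^ n / 2 ^ (2 * n ^ 2) * (9/34 * (D / 2 ^ (n+1))) := by
        have hepow : (2:ℝ) ^ (2 * (n+1) ^ 2) = 2 ^ (2 * n ^ 2) * 2 ^ (n+1) * 2 ^ (3*n+1) := by
          rw [← pow_add, ← pow_add]; congr 1; ring
        have h1 : D ^ (n+1) / 2 ^ (2 * (n+1) ^ 2) =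
            (D ^ n * D) / (2 ^ (2 * n ^ 2) * 2 ^ (n+1)) * (1 / 2 ^ (3*n+1)) := by
          rw [hepow, pow_succ]; ring
        have h2 : D ^ n / 2 ^ (2 * n ^ 2) * (9/34 * (D / 2 ^ (n+1))) =
            (D ^ n * D) / (2 ^ (2 * n ^ 2) * 2 ^ (n+1)) * (9/34) := by ring
        rw [h1, h2]
        apply mul_le_mul_of_nonneg_left _ (by positivity)
        have h3 : (2:ℝ) ^ 7 ≤ 2 ^ (3*n+1) := pow_le_pow_right₀ (by norm_num) (by omega)
        have h4 : (0:ℝ) < 2 ^ (3*n+1) := by positivity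
        rw [div_le_iff₀ h4]
        nlinarith
      linarith
  -- main goal
  intro i hi
  rcases eq_or_lt_of_le hi with h1 | h2
  · -- i = 1
    subst h1
    rw [Finset.Icc_self, Finset.prod_singleton]
    -- facts
    obtain ⟨ht2a, ht2b⟩ := htan 2 (by norm_num)
    obtain ⟨ht3a, ht3b⟩ := htan 3 (by norm_num)
    set t2 := Real.tan (θ 2) with ht2def
    set t3 := Real.tan (θ 3) with ht3def
    have htθ1 : Real.tan (θ 1) = 1 := by rw [hθ1, Real.tan_arctan]
    have hs : 33/100 ≤ Real.tan (D / 2 ^ 1) := by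
      have h := htanDj 1 (by norm_num)
      have : 33/100 ≤ D / 2 ^ 1 := by norm_num; linarith
      linarith
    have hid := hstep 1 (by norm_num)
    rw [htθ1] at hid
    -- t2 ≥ 99/50
    have ht2lb : 99/50 ≤ t2 := by
      have hpos : (0:ℝ) ≤ 1 + t2 := by linarith
      nlinarith [mul_le_mul_of_nonneg_right hs hpos]
    -- δ 1 ≥ 39/400
    have hd1 : 39/400 ≤ δ 1 := by
      rw [hδ 1, htθ1, le_div_iff₀ (by linarith : (0:ℝ) < 2 * t2 + 1)]
      linarith
    -- δ 2 ≤ 169/1000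
    have hd2 : δ 2 ≤ 169/1000 := by
      rw [hδ 2, div_le_iff₀ (by linarith : (0:ℝ) < 2 * t3 + t2)]
      linarith
    have hfac2 : (162:ℝ)/1000 ≤ 1/2 - 2 * δ 2 := by linarith
    have hmul : (39:ℝ)/400 * (162/1000) ≤ δ 1 * (1/2 - 2 * δ 2) :=
      mul_le_mul hd1 hfac2 (by norm_num) (by linarith)
    have : D ^ 1 / 2 ^ (2 * 1 ^ 2 + 4) = D / 64 := by norm_num
    rw [this]
    linarith
  · -- i ≥ 2
    have hi2 : 2 ≤ i := h2
    have hp := hprod i hi2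
    have hf := hfac (i+1) (by omega)
    have hprev : (0:ℝ) ≤ D ^ i / 2 ^ (2 * i ^ 2) := by positivity
    have hmul : D ^ i / 2 ^ (2 * i ^ 2) * (1/16) ≤
        (∏ j ∈ Finset.Icc 1 i, δ j) * (1/2 - 2 * δ (i+1)) :=
      mul_le_mul hp hf (by norm_num) (le_trans hprev hp)
    have heq : D ^ i / 2 ^ (2 * i ^ 2 + 4) = D ^ i / 2 ^ (2 * i ^ 2) * (1/16) := by
      rw [pow_add]; norm_num; ring
    rw [heq]
    exact hmul
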